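/- Let P be a multilinear polynomial over the dyadic rationals D in variables x_1,...,x_n (i.e. an element of D[x]/⟨x_i²-x_i⟩), and let Q be a linear Boolean polynomial (a sum of distinct variables over Z_2). Then for any variable x_i, the order of P after substituting x_i by the lifting ⌈Q⌉ is at most the order of P, where the order of a term (a/2^b)·x^α with a odd is b + |α| - 1, and the order of a polynomial is the maximum order of its terms. -/

import Mathlib

open MvPolynomial

/-- The order of a polynomial over the dyadic rationals: the order of a term
`(a/2^b)·x^α` with `a` odd is `b + |α| - 1`, and the order of a polynomial is the
maximum order over its terms (⊥ for the zero polynomial). -/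
noncomputable def pord {σ : Type*} (P : MvPolynomial σ ℚ) : WithBot ℤ :=
  P.support.sup fun α =>
    ((-(padicValRat 2 (coeff α P)) + (α.sum fun _ e => (e : ℤ)) - 1 : ℤ) : WithBot ℤ)

/-- The lifting `⌈∑_{j∈S} x_j⌉ = ∑_{∅≠S'⊆S} (-2)^(|S'|-1) ∏_{j∈S'} x_j` of a linear
Boolean polynomial to the dyadic rationals. -/
noncomputable def liftLin {σ : Type*} [DecidableEq σ] (S : Finset σ) :
    MvPolynomial σ ℚ :=
  ∑ T ∈ S.powerset.erase ∅, C ((-2 : ℚ) ^ (T.card - 1)) * ∏ j ∈ T, X j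

section Good

variable {σ : Type*}

/-- Integer weight of a monomial exponent. -/
def wt (β : σ →₀ ℕ) : ℤ := β.sum fun _ e => (e : ℤ)

/-- `good m P` : every term of `P` has order at most `m`. -/
def good (m : ℤ) (P : MvPolynomial σ ℚ) : Prop :=
  ∀ β, coeff β P ≠ 0 → wt β - 1 - padicValRat 2 (coeff β P) ≤ m

theorem good_mono {m m' : ℤ} {P : MvPolynomial σ ℚ} (h : m ≤ m') (hP : good m P) :
    good m' P := fun β hβ => (hP β hβ).trans h

theorem good_zero {m : ℤ} : good m (0 : MvPolynomial σ ℚ) := fun β hβ => by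
  simp at hβ

theorem good_add {m : ℤ} {P Q : MvPolynomial σ ℚ} (hP : good m P) (hQ : good m Q) :
    good m (P + Q) := by
  intro β hβ
  rw [coeff_add] at hβ ⊢
  by_cases h1 : coeff β P = 0
  · rw [h1, zero_add] at hβ ⊢
    exact hQ β hβ
  by_cases h2 : coeff β Q = 0
  · rw [h2, add_zero] at hβ ⊢
    exact hP β hβ
  have hmin := padicValRat.min_le_padicValRat_add (p := 2) hβ
  rcases min_le_iff.mp (le_refl (min (padicValRat 2 (coeff β P)) (padicValRat 2 (coeff β Q))))
    with h | h
  · have := hP β h1; linarith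
  · have := hQ β h2; linarith

theorem good_sum {m : ℤ} {ι : Type*} (s : Finset ι) (g : ι → MvPolynomial σ ℚ)
    (h : ∀ j ∈ s, good m (g j)) : good m (∑ j ∈ s, g j) := by
  classical
  induction s using Finset.induction_on with
  | empty => simpa using (good_zero (σ := σ) (m := m))
  | insert _ _ hj ih =>
    rw [Finset.sum_insert hj]
    exact good_add (h _ (Finset.mem_insert_self _ _))
      (ih fun j hjs => h j (Finset.mem_insert_of_mem hjs))

theorem good_monomial {m : ℤ} {α : σ →₀ ℕ} {c : ℚ}
    (h : c ≠ 0 → wt α - 1 - padicValRat 2 c ≤ m) : good m (monomial α c) := by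
  classical
  intro β hβ
  rw [coeff_monomial] at hβ ⊢
  split at hβ
  · next heq => subst heq; simp only [if_pos rfl]; exact h hβ
  · exact absurd rfl hβ

theorem good_mul {a b : ℤ} {P Q : MvPolynomial σ ℚ} (hP : good a P) (hQ : good b Q) :
    good (a + b + 1) (P * Q) := by
  classical
  rw [P.as_sum, Q.as_sum, Finset.sum_mul_sum]
  refine good_sum _ _ fun α hα => good_sum _ _ fun γ hγ => ?_
  rw [monomial_mul]
  refine good_monomial fun hc => ?_
  have h1 : coeff α P ≠ 0 := left_ne_zero_of_mul hc
  have h2 : coeff γ Q ≠ 0 := right_ne_zero_of_mul hc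
  have key1 := hP α h1
  have key2 := hQ γ h2
  have hv : padicValRat 2 (coeff α P * coeff γ Q) =
      padicValRat 2 (coeff α P) + padicValRat 2 (coeff γ Q) :=
    padicValRat.mul (p := 2) h1 h2
  have hw : wt (α + γ) = wt α + wt γ := by
    unfold wt
    exact Finsupp.sum_add_index' (fun _ => by simp) (fun _ m n => by push_cast; ring)
  rw [hv, hw]
  linarith

theorem good_one : good (-1) (1 : MvPolynomial σ ℚ) := by
  have : (1 : MvPolynomial σ ℚ) = monomial 0 1 := by simp
  rw [this]
  refine good_monomial fun _ => ?_
  simp [wt]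

theorem good_pow {g : MvPolynomial σ ℚ} (hg : good 0 g) :
    ∀ e : ℕ, 1 ≤ e → good ((e : ℤ) - 1) (g ^ e) := by
  intro e he
  induction e, he using Nat.le_induction with
  | base => simpa using hg
  | succ n hn ih =>
    rw [pow_succ]
    have := good_mul ih hg
    refine good_mono ?_ this
    push_cast; ring_nf; exact le_refl _

theorem good_prod_pow {s : Finset σ} {w : σ → ℕ} {g : σ → MvPolynomial σ ℚ}
    (hw : ∀ j ∈ s, 1 ≤ w j) (hg : ∀ j ∈ s, good 0 (g j)) :
    good ((∑ j ∈ s, (w j : ℤ)) - 1) (∏ j ∈ s, g j ^ w j) := by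
  classical
  induction s using Finset.induction_on with
  | empty => simpa using (good_one (σ := σ))
  | @insert j s hj ih =>
    rw [Finset.prod_insert hj, Finset.sum_insert hj]
    have h1 : good ((w j : ℤ) - 1) (g j ^ w j) :=
      good_pow (hg j (Finset.mem_insert_self _ _)) _ (hw j (Finset.mem_insert_self _ _))
    have h2 := ih (fun k hk => hw k (Finset.mem_insert_of_mem hk))
      (fun k hk => hg k (Finset.mem_insert_of_mem hk))
    have := good_mul h1 h2
    refine good_mono ?_ this
    ring_nf; exact le_refl _

theorem good_prod {s : Finset σ} {g : σ → MvPolynomial σ ℚ}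
    (hg : ∀ j ∈ s, good 0 (g j)) : good ((s.card : ℤ) - 1) (∏ j ∈ s, g j) := by
  have := good_prod_pow (w := fun _ => 1) (fun j _ => le_refl 1) hg
  simpa using this

theorem good_C {c : ℚ} : good (-(padicValRat 2 c) - 1) (C c : MvPolynomial σ ℚ) := by
  rw [C_apply]
  refine good_monomial fun _ => ?_
  simp only [wt, Finsupp.sum_zero_index]
  linarith

theorem good_X {j : σ} : good 0 (X j : MvPolynomial σ ℚ) := by
  classical
  rw [X]
  refine good_monomial fun _ => ?_
  simp [wt, Finsupp.sum_single_index]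

theorem good_liftLin [DecidableEq σ] (S : Finset σ) : good 0 (liftLin (σ := σ) S) := by
  unfold liftLin
  refine good_sum _ _ fun T hT => ?_
  have hTne : T ≠ ∅ := (Finset.mem_erase.mp hT).1
  have hcard : 1 ≤ T.card := Finset.card_pos.mpr (Finset.nonempty_of_ne_empty hTne)
  have hv : padicValRat 2 ((-2 : ℚ) ^ (T.card - 1)) = (T.card : ℤ) - 1 := by
    rw [padicValRat.pow (p := 2) (-2 : ℚ)]
    rw [show ((-2 : ℚ)) = -(2 : ℚ) by norm_num, padicValRat.neg]
    rw [show ((2 : ℚ)) = ((2 : ℕ) : ℚ) by norm_num, padicValRat.self (by norm_num)]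
    omega
  have h1 : good (-(((T.card : ℤ) - 1)) - 1) (C ((-2 : ℚ) ^ (T.card - 1)) : MvPolynomial σ ℚ) := by
    have := good_C (σ := σ) (c := (-2 : ℚ) ^ (T.card - 1))
    rwa [hv] at this
  have h2 : good ((T.card : ℤ) - 1) (∏ j ∈ T, (X j : MvPolynomial σ ℚ)) :=
    good_prod fun j _ => good_X
  have := good_mul h1 h2
  refine good_mono ?_ this
  ring_nf; exact le_refl _

end Good

/-- substituting the lifting of a linear Boolean polynomial `Q` (not
containing `x_i`) for a variable `x_i` in a multilinear dyadic polynomial `P` does not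
increase the order. -/
theorem stmt2 {σ : Type*} [DecidableEq σ] (P : MvPolynomial σ ℚ)
    (hml : ∀ α ∈ P.support, ∀ j : σ, α j ≤ 1)
    (hdyadic : ∀ α ∈ P.support, ∃ (a : ℤ) (b : ℕ), coeff α P = (a : ℚ) / 2 ^ b)
    (i : σ) (S : Finset σ) (hiS : i ∉ S) :
    pord (bind₁ (fun j => if j = i then liftLin S else X j) P) ≤ pord P := by
  classical
  set f : σ → MvPolynomial σ ℚ := fun j => if j = i then liftLin S else X j with hf
  by_cases hP0 : P = 0
  · subst hP0
    simp [pord]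
  have hne : P.support.Nonempty := support_nonempty.mpr hP0
  set ordf : (σ →₀ ℕ) → ℤ := fun α =>
    -(padicValRat 2 (coeff α P)) + (α.sum fun _ e => (e : ℤ)) - 1 with hordf
  set m : ℤ := P.support.sup' hne ordf with hm
  have hpordP : pord P = (m : WithBot ℤ) := by
    rw [pord, hm, Finset.coe_sup' hne ordf]
    rfl
  have hgoodf : ∀ j : σ, good 0 (f j) := by
    intro j
    rw [hf]
    by_cases hj : j = i
    · simp only [if_pos hj]
      exact good_liftLin S
    · simp only [if_neg hj]
      exact good_X
  have hgood : good m (bind₁ f P) := by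
    rw [bind₁, aeval_def, eval₂_eq]
    refine good_sum _ _ fun α hα => ?_
    have hcoeff : coeff α P ≠ 0 := mem_support_iff.mp hα
    have hwt : wt α = ∑ j ∈ α.support, ((α j : ℤ)) := rfl
    have hprod : good (wt α - 1) (∏ j ∈ α.support, f j ^ α j) := by
      rw [hwt]
      exact good_prod_pow (fun j hj => Nat.one_le_iff_ne_zero.mpr (Finsupp.mem_support_iff.mp hj))
        (fun j _ => hgoodf j)
    have hC : good (-(padicValRat 2 (coeff α P)) - 1)
        ((algebraMap ℚ (MvPolynomial σ ℚ)) (coeff α P)) := by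
      have : (algebraMap ℚ (MvPolynomial σ ℚ)) (coeff α P) = C (coeff α P) := rfl
      rw [this]
      exact good_C
    have := good_mul hC hprod
    refine good_mono ?_ this
    have hle : ordf α ≤ m := Finset.le_sup' ordf hα
    rw [hordf] at hle
    simp only [wt] at *
    linarith
  rw [hpordP, pord]
  refine Finset.sup_le fun β hβ => ?_
  have hβ' := hgood β (mem_support_iff.mp hβ)
  rw [WithBot.coe_le_coe]
  simp only [wt] at hβ'
  linarith
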